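/- (Metastability of bounded series) Let (bₙ) be a sequence of nonnegative reals with ∑bᵢ ≤ b. Then for every ε > 0 and g : ℕ → ℕ, there exists n ≤ Φ(ε,g) := g̃^(⌈b/ε⌉)(0), where g̃(n) := n + g(n) + 1, such that ∑_{j=n}^{n+g(n)} bⱼ ≤ ε. -/

import Mathlib

open Filter Finset

/-- Metastability of bounded series: if (bₙ) is nonnegative with all partial
sums ≤ b, then for every ε > 0 and g : ℕ → ℕ there is
n ≤ g̃^(⌈b/ε⌉)(0), where g̃(k) := k + g(k) + 1, with ∑_{j=n}^{n+g(n)} bⱼ ≤ ε. -/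
theorem stmt18 (b' : ℕ → ℝ) (b : ℝ)
    (hb' : ∀ n, 0 ≤ b' n)
    (hb : ∀ n : ℕ, ∑ i ∈ Finset.range n, b' i ≤ b)
    (ε : ℝ) (hε : 0 < ε) (g : ℕ → ℕ) :
    ∃ n ≤ (fun k => k + g k + 1)^[⌈b / ε⌉₊] 0,
      ∑ j ∈ Finset.Icc n (n + g n), b' j ≤ ε := by
  set G : ℕ → ℕ := fun k => k + g k + 1 with hG
  set N := ⌈b / ε⌉₊ with hN
  set x : ℕ → ℕ := fun k => G^[k] 0 with hx
  have hxs : ∀ k, x (k + 1) = x k + g (x k) + 1 := by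
    intro k
    simp [hx, Function.iterate_succ_apply']
    rfl
  have hxmono : Monotone x := by
    apply monotone_nat_of_le_succ
    intro k
    rw [hxs k]
    omega
  -- block sum formula
  have hblock : ∀ k, ∑ j ∈ Finset.range (x (k + 1)), b' j
      = ∑ j ∈ Finset.range (x k), b' j + ∑ j ∈ Finset.Icc (x k) (x k + g (x k)), b' j := by
    intro k
    have h1 := Finset.sum_Ico_consecutive b' (Nat.zero_le (x k))
      (by omega : x k ≤ x k + g (x k) + 1)
    rw [hxs k, ← Finset.Ico_add_one_right_eq_Icc, Finset.range_eq_Ico, Finset.range_eq_Ico]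
    exact h1.symm
  rcases Nat.eq_zero_or_pos N with hN0 | hNpos
  · -- then b ≤ 0 and n = 0 works
    have hble : b ≤ 0 := by
      have hd := (Nat.ceil_eq_zero).mp hN0
      have h' := mul_le_mul_of_nonneg_right hd (le_of_lt hε)
      rw [div_mul_cancel₀ _ (ne_of_gt hε)] at h'
      simpa using h'
    refine ⟨0, Nat.zero_le _, ?_⟩
    have : ∑ j ∈ Finset.Icc 0 (0 + g 0), b' j = ∑ j ∈ Finset.range (g 0 + 1), b' j := by
      congr 1
      ext i
      simp only [Finset.mem_Icc, Finset.mem_range]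
      omega
    rw [this]
    linarith [hb (g 0 + 1)]
  · by_contra h
    push_neg at h
    -- h : ∀ n ≤ x N, ε < block sum at n
    have key : ∀ k ≤ N, 1 ≤ k → (k : ℝ) * ε < ∑ j ∈ Finset.range (x k), b' j := by
      intro k hk hk1
      induction k with
      | zero => omega
      | succ m ih =>
        rcases Nat.eq_zero_or_pos m with hm | hm
        · subst hm
          rw [hblock 0]
          have h0 : ε < ∑ j ∈ Finset.Icc (x 0) (x 0 + g (x 0)), b' j :=
            h (x 0) (hxmono (Nat.zero_le N))
          have : (0:ℝ) ≤ ∑ j ∈ Finset.range (x 0), b' j :=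
            Finset.sum_nonneg fun i _ => hb' i
          push_cast
          linarith
        · have ihm := ih (by omega) hm
          rw [hblock m]
          have hm2 : ε < ∑ j ∈ Finset.Icc (x m) (x m + g (x m)), b' j :=
            h (x m) (hxmono (by omega : m ≤ N))
          push_cast
          linarith
    have h1 := key N le_rfl hNpos
    have h2 : b ≤ (N : ℝ) * ε := by
      have := Nat.le_ceil (b / ε)
      rw [← hN] at this
      calc b = (b / ε) * ε := by field_simp
        _ ≤ (N : ℝ) * ε := by exact mul_le_mul_of_nonneg_right this (le_of_lt hε)
    linarith [hb (x N)]
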